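/- Soundness of the reduction from best Nash to the maximum-prior/threshold-signaling problem: let ε ∈ (0,1] and η' ∈ [−2,2], and suppose μ ∈ Δ_n satisfies val(μ) ≥ η' − 2ε. Then there exists x ∈ Δ_m such that x^T(R+C)μ ≥ η' − 2ε and max_{i ∈ [m]} (Rμ)_i + max_{j ∈ [n]} (x^T C)_j − x^T(R+C)μ ≤ 6ε (i.e., (x, μ) is a 6ε-approximate Nash equilibrium of the bimatrix game (R,C) with social welfare at least η' − 2ε). -/

import Mathlib

open Finset

/-- The value of the extended security game constructed from the bimatrix game
`(R, C)` with parameter `ε`: states `[n]`, row strategies `[m]`, column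
strategies `[m]×[n]`, `Ā_{i,(i',j)} = -(1/ε)C_{i,j}`,
`B_{i,j} = (1+1/ε)(R_{i,j}+C_{i,j})`, `D_{(i,j'),j} = -(1/ε)R_{i,j}`;
`val(μ) = max_{x ∈ Δ_m} [ xᵀBμ + min_k ((xᵀĀ)_k + (μᵀDᵀ)_k) ]`. -/
noncomputable def valESG (m n : ℕ) (ε : ℝ) (R C : Matrix (Fin m) (Fin n) ℝ)
    (μ : Fin n → ℝ) : ℝ :=
  sSup {t : ℝ | ∃ x ∈ stdSimplex ℝ (Fin m),
    t = (∑ i : Fin m, ∑ j : Fin n, x i * ((1 + 1 / ε) * (R i j + C i j)) * μ j) +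
      ⨅ k : Fin m × Fin n,
        ((∑ i : Fin m, x i * (-(1 / ε) * C i k.2)) +
          ∑ j : Fin n, (-(1 / ε) * R k.1 j) * μ j)}

/-- The objective of the extended security game as a function of `x`. -/
noncomputable def esgObj (m n : ℕ) (ε : ℝ) (R C : Matrix (Fin m) (Fin n) ℝ)
    (μ : Fin n → ℝ) (x : Fin m → ℝ) : ℝ :=
  (∑ i : Fin m, ∑ j : Fin n, x i * ((1 + 1 / ε) * (R i j + C i j)) * μ j) +
    ⨅ k : Fin m × Fin n,
      ((∑ i : Fin m, x i * (-(1 / ε) * C i k.2)) +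
        ∑ j : Fin n, (-(1 / ε) * R k.1 j) * μ j)

lemma valESG_eq_sSup_image (m n : ℕ) (ε : ℝ) (R C : Matrix (Fin m) (Fin n) ℝ)
    (μ : Fin n → ℝ) :
    valESG m n ε R C μ = sSup (esgObj m n ε R C μ '' stdSimplex ℝ (Fin m)) := by
  unfold valESG esgObj
  congr 1
  ext t
  constructor
  · rintro ⟨x, hx, rfl⟩; exact ⟨x, hx, rfl⟩
  · rintro ⟨x, hx, rfl⟩; exact ⟨x, hx, rfl⟩

lemma continuous_finset_inf'_aux {ι X : Type*} [TopologicalSpace X]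
    (s : Finset ι) (hs : s.Nonempty) (g : ι → X → ℝ)
    (hg : ∀ i, Continuous (g i)) :
    Continuous fun x => s.inf' hs fun i => g i x := by
  induction hs using Finset.Nonempty.cons_induction with
  | singleton a => simpa using hg a
  | cons a s ha hs ih =>
    have he : (fun x => (Finset.cons a s ha).inf' (Finset.cons_nonempty ha) fun i => g i x)
        = fun x => min (g a x) (s.inf' hs fun i => g i x) := by
      funext x
      rw [Finset.inf'_cons]
    rw [he]
    exact (hg a).min ih

lemma continuous_esgObj (m n : ℕ) (hm : 0 < m) (hn : 0 < n) (ε : ℝ)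
    (R C : Matrix (Fin m) (Fin n) ℝ) (μ : Fin n → ℝ) :
    Continuous (esgObj m n ε R C μ) := by
  haveI : Nonempty (Fin m) := Fin.pos_iff_nonempty.mp hm
  haveI : Nonempty (Fin n) := Fin.pos_iff_nonempty.mp hn
  unfold esgObj
  apply Continuous.add
  · exact continuous_finset_sum _ fun i _ => continuous_finset_sum _ fun j _ =>
      ((continuous_apply i).mul continuous_const).mul continuous_const
  · simp only [← Finset.inf'_univ_eq_ciInf]
    exact continuous_finset_inf'_aux _ _ _ fun k =>
      (continuous_finset_sum _ fun i _ =>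
        (continuous_apply i).mul continuous_const).add continuous_const

/-- Soundness of the reduction from best Nash to the maximum-prior/threshold-
signaling problem: if `ε ∈ (0,1]`, `η' ∈ [-2,2]` and `val(μ) ≥ η' - 2ε`, then
there is `x ∈ Δ_m` such that `(x, μ)` is a `6ε`-approximate Nash equilibrium of
`(R, C)` with social welfare at least `η' - 2ε`. -/
theorem value_implies_approx_nash (m n : ℕ) (hm : 0 < m) (hn : 0 < n)
    (ε : ℝ) (hε : 0 < ε) (hε1 : ε ≤ 1)
    (R C : Matrix (Fin m) (Fin n) ℝ)
    (hR : ∀ i j, |R i j| ≤ 1) (hC : ∀ i j, |C i j| ≤ 1)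
    (η' : ℝ) (hη'lb : -2 ≤ η') (hη'ub : η' ≤ 2)
    (μ : Fin n → ℝ) (hμ : μ ∈ stdSimplex ℝ (Fin n))
    (hval : η' - 2 * ε ≤ valESG m n ε R C μ) :
    ∃ x ∈ stdSimplex ℝ (Fin m),
      η' - 2 * ε ≤ ∑ i : Fin m, ∑ j : Fin n, x i * (R i j + C i j) * μ j ∧
      (⨆ i : Fin m, ∑ j : Fin n, R i j * μ j) +
          (⨆ j : Fin n, ∑ i : Fin m, x i * C i j) -
          ∑ i : Fin m, ∑ j : Fin n, x i * (R i j + C i j) * μ j ≤ 6 * ε := by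
  haveI : Nonempty (Fin m) := Fin.pos_iff_nonempty.mp hm
  haveI : Nonempty (Fin n) := Fin.pos_iff_nonempty.mp hn
  obtain ⟨hμ0, hμ1⟩ := hμ
  -- get a maximizer of the objective
  have hne : (stdSimplex ℝ (Fin m)).Nonempty := by
    refine ⟨fun _ => (m : ℝ)⁻¹, fun i => by positivity, ?_⟩
    rw [Finset.sum_const, Finset.card_univ, Fintype.card_fin, nsmul_eq_mul,
      mul_inv_cancel₀ (Nat.cast_ne_zero.mpr hm.ne')]
  have hKc : IsCompact (esgObj m n ε R C μ '' stdSimplex ℝ (Fin m)) :=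
    (isCompact_stdSimplex _ _).image (continuous_esgObj m n hm hn ε R C μ)
  obtain ⟨x, hxmem, hfx⟩ := hKc.sSup_mem (hne.image _)
  have hvalx : η' - 2 * ε ≤ esgObj m n ε R C μ x := by
    rw [hfx]; rw [valESG_eq_sSup_image] at hval; exact hval
  obtain ⟨hx0, hx1⟩ := hxmem
  refine ⟨x, ⟨hx0, hx1⟩, ?_⟩
  set a : Fin m → ℝ := fun i => ∑ j : Fin n, R i j * μ j with ha
  set b : Fin n → ℝ := fun j => ∑ i : Fin m, x i * C i j with hb
  set S : ℝ := ∑ i : Fin m, ∑ j : Fin n, x i * (R i j + C i j) * μ j with hS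
  obtain ⟨i0, hi0⟩ := Finite.exists_max a
  obtain ⟨j0, hj0⟩ := Finite.exists_max b
  -- decomposition of the welfare
  have hSdecomp : S = (∑ i : Fin m, x i * a i) + (∑ j : Fin n, b j * μ j) := by
    have h1 : ∑ i : Fin m, x i * a i = ∑ i : Fin m, ∑ j : Fin n, x i * R i j * μ j := by
      simp [ha, Finset.mul_sum, mul_assoc]
    have h2 : ∑ j : Fin n, b j * μ j = ∑ i : Fin m, ∑ j : Fin n, x i * C i j * μ j := by
      simp only [hb, Finset.sum_mul]
      exact Finset.sum_comm
    rw [hS, h1, h2, ← Finset.sum_add_distrib]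
    refine Finset.sum_congr rfl fun i _ => ?_
    rw [← Finset.sum_add_distrib]
    exact Finset.sum_congr rfl fun j _ => by ring
  have hxa : ∑ i : Fin m, x i * a i ≤ a i0 :=
    calc ∑ i : Fin m, x i * a i ≤ ∑ i : Fin m, x i * a i0 :=
          Finset.sum_le_sum fun i _ => mul_le_mul_of_nonneg_left (hi0 i) (hx0 i)
    _ = a i0 := by rw [← Finset.sum_mul, hx1, one_mul]
  have hμb : ∑ j : Fin n, b j * μ j ≤ b j0 :=
    calc ∑ j : Fin n, b j * μ j ≤ ∑ j : Fin n, b j0 * μ j :=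
          Finset.sum_le_sum fun j _ => mul_le_mul_of_nonneg_right (hj0 j) (hμ0 j)
    _ = b j0 := by rw [← Finset.mul_sum, hμ1, mul_one]
  have hSle : S ≤ a i0 + b j0 := by rw [hSdecomp]; exact add_le_add hxa hμb
  -- S ≤ 2
  have hS2 : S ≤ 2 := by
    have hterm : ∀ i j, x i * (R i j + C i j) * μ j ≤ x i * 2 * μ j := by
      intro i j
      have h1 := abs_le.mp (hR i j)
      have h2 := abs_le.mp (hC i j)
      nlinarith [mul_nonneg (hx0 i) (hμ0 j), hx0 i, hμ0 j]
    calc S ≤ ∑ i : Fin m, ∑ j : Fin n, x i * 2 * μ j :=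
          Finset.sum_le_sum fun i _ => Finset.sum_le_sum fun j _ => hterm i j
    _ = 2 := by
        simp only [← Finset.mul_sum, hμ1, mul_one]
        rw [← Finset.sum_mul, hx1, one_mul]
  -- rewrite the objective
  have hB : (∑ i : Fin m, ∑ j : Fin n, x i * ((1 + 1 / ε) * (R i j + C i j)) * μ j)
      = (1 + 1 / ε) * S := by
    rw [hS, Finset.mul_sum]
    refine Finset.sum_congr rfl fun i _ => ?_
    rw [Finset.mul_sum]
    exact Finset.sum_congr rfl fun j _ => by ring
  have hI : (⨅ k : Fin m × Fin n,
      ((∑ i : Fin m, x i * (-(1 / ε) * C i k.2)) +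
        ∑ j : Fin n, (-(1 / ε) * R k.1 j) * μ j))
      ≤ -(1 / ε) * b j0 + -(1 / ε) * a i0 := by
    have hbdd : BddBelow (Set.range fun k : Fin m × Fin n =>
        ((∑ i : Fin m, x i * (-(1 / ε) * C i k.2)) +
          ∑ j : Fin n, (-(1 / ε) * R k.1 j) * μ j)) := (Set.finite_range _).bddBelow
    refine (ciInf_le hbdd (i0, j0)).trans_eq ?_
    have e1 : ∑ i : Fin m, x i * (-(1 / ε) * C i j0) = -(1 / ε) * b j0 := by
      rw [hb, Finset.mul_sum]
      exact Finset.sum_congr rfl fun i _ => by ring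
    have e2 : ∑ j : Fin n, (-(1 / ε) * R i0 j) * μ j = -(1 / ε) * a i0 := by
      rw [ha, Finset.mul_sum]
      exact Finset.sum_congr rfl fun j _ => by ring
    rw [e1, e2]
  have key : η' - 2 * ε ≤ (1 + 1 / ε) * S + (-(1 / ε) * b j0 + -(1 / ε) * a i0) := by
    have := hvalx
    unfold esgObj at this
    rw [hB] at this
    linarith [hI]
  have hinv : ε * (1 / ε) = 1 := mul_one_div_cancel hε.ne'
  have hεinvpos : (0 : ℝ) < 1 / ε := by positivity
  constructor
  · -- welfare lower bound
    have h := mul_le_mul_of_nonneg_left hSle hεinvpos.le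
    nlinarith [key, h]
  · -- approximate Nash
    have hM : (⨆ i : Fin m, a i) ≤ a i0 := ciSup_le hi0
    have hN : (⨆ j : Fin n, b j) ≤ b j0 := ciSup_le hj0
    have keyε := mul_le_mul_of_nonneg_left key hε.le
    have h3 : ε * ((1 + 1 / ε) * S + (-(1 / ε) * b j0 + -(1 / ε) * a i0))
        = ε * S + S - b j0 - a i0 := by
      field_simp
      ring
    rw [h3] at keyε
    have h4 := mul_le_mul_of_nonneg_left hS2 hε.le
    have h5 := mul_le_mul_of_nonneg_left hη'lb hε.le
    have h6 := mul_le_mul_of_nonneg_left hε1 hε.le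
    nlinarith [keyε, hM, hN]
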